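/- Let (C_*, d) be an N-chain complex of finite-dimensional complex inner product spaces with 1 ≤ q ≤ N−1. Then C_n admits an orthogonal-type direct sum decomposition C_n ≅ ker Δ_{n,q} ⊕ im(d^{N-q}|_{C_{n+N-q}}) ⊕ im((d^q)*|_{C_{n-q}}), i.e., dim C_n = β_{n,q} + rank(d^{N-q} : C_{n+N-q} → C_n) + rank(d^q : C_n → C_{n-q}). -/

import Mathlib

open Module

section Aux

variable {V : Type*} [NormedAddCommGroup V] [InnerProductSpace ℂ V] [FiniteDimensional ℂ V]

private lemma ker_adjoint_eq_orth_range (f : V →ₗ[ℂ] V) :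
    LinearMap.ker (LinearMap.adjoint f) = (LinearMap.range f)ᗮ := by
  ext y
  simp only [LinearMap.mem_ker, Submodule.mem_orthogonal]
  constructor
  · rintro h u ⟨x, rfl⟩
    rw [← LinearMap.adjoint_inner_right, h, inner_zero_right]
  · intro h
    rw [← inner_self_eq_zero (𝕜 := ℂ), LinearMap.adjoint_inner_right]
    exact h _ ⟨_, rfl⟩

private lemma finrank_range_adjoint (f : V →ₗ[ℂ] V) :
    finrank ℂ ↥(LinearMap.range f) = finrank ℂ ↥(LinearMap.range (LinearMap.adjoint f)) := by
  have h1 := LinearMap.finrank_range_add_finrank_ker (LinearMap.adjoint f)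
  rw [ker_adjoint_eq_orth_range] at h1
  have h2 := Submodule.finrank_add_finrank_orthogonal (LinearMap.range f)
  omega

end Aux

/-- Hodge-type decomposition for Mayer Laplacians:
`C_n ≅ ker Δ_{n,q} ⊕ im(d^{N-q}) ⊕ im((d^q)*)`, i.e. the three subspaces together span the
whole space and `dim C_n = β_{n,q} + rank(d^{N-q}) + rank(d^q)`
(where `rank(d^q) = rank((d^q)*)`). -/
theorem mayer_hodge_decomposition {V : Type*} [NormedAddCommGroup V]
    [InnerProductSpace ℂ V] [FiniteDimensional ℂ V]
    (N : ℕ) (hN : 2 ≤ N) (d : V →ₗ[ℂ] V) (hd : d ^ N = 0)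
    (q : ℕ) (hq1 : 1 ≤ q) (hq2 : q ≤ N - 1)
    (Δ : V →ₗ[ℂ] V)
    (hΔ : Δ = LinearMap.adjoint (d ^ q) ∘ₗ (d ^ q) +
        (d ^ (N - q)) ∘ₗ LinearMap.adjoint (d ^ (N - q))) :
    (LinearMap.ker Δ ⊔ LinearMap.range (d ^ (N - q)) ⊔
        LinearMap.range (LinearMap.adjoint (d ^ q)) = ⊤) ∧
      finrank ℂ ↥(LinearMap.range (d ^ q)) =
        finrank ℂ ↥(LinearMap.range (LinearMap.adjoint (d ^ q))) ∧
      finrank ℂ V =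
        finrank ℂ ↥(LinearMap.ker Δ) + finrank ℂ ↥(LinearMap.range (d ^ (N - q))) +
          finrank ℂ ↥(LinearMap.range (d ^ q)) := by
  set A := d ^ q with hA
  set B := d ^ (N - q) with hB
  have hAB : A ∘ₗ B = 0 := by
    rw [hA, hB, ← Module.End.mul_eq_comp, ← pow_add,
      Nat.add_sub_cancel' (le_trans hq2 (Nat.sub_le N 1)), hd]
  have hABapply : ∀ x, A (B x) = 0 := fun x => by
    have := congrArg (fun f => f x) hAB; simpa using this
  -- ker Δ = (range B ⊔ range A*)ᗮ
  have hker : LinearMap.ker Δ = (LinearMap.range B ⊔ LinearMap.range (LinearMap.adjoint A))ᗮ := by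
    ext x
    rw [Submodule.mem_orthogonal]
    constructor
    · intro hx
      have hx0 : Δ x = 0 := hx
      have hinner : inner (𝕜 := ℂ) (Δ x) x = 0 := by rw [hx0, inner_zero_left]
      rw [hΔ] at hinner
      simp only [LinearMap.add_apply, LinearMap.comp_apply, inner_add_left] at hinner
      have e2 : ∀ z, inner (𝕜 := ℂ) (B z) x = inner ℂ z (LinearMap.adjoint B x) := fun z => by
        conv_lhs => rw [← LinearMap.adjoint_adjoint (A := B)]
        rw [LinearMap.adjoint_inner_left]
      rw [LinearMap.adjoint_inner_left, e2] at hinner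
      rw [inner_self_eq_norm_sq_to_K (𝕜 := ℂ), inner_self_eq_norm_sq_to_K (𝕜 := ℂ)] at hinner
      have h1 : ‖A x‖ ^ 2 + ‖LinearMap.adjoint B x‖ ^ 2 = 0 := by
        have := congrArg Complex.re hinner
        simpa [← Complex.ofReal_pow, Complex.add_re, Complex.ofReal_re] using this
      have hA0 : A x = 0 := by
        have := sq_nonneg ‖A x‖
        have := sq_nonneg ‖LinearMap.adjoint B x‖
        have hn : ‖A x‖ ^ 2 = 0 := by linarith
        simpa using sq_eq_zero_iff.mp hn
      have hB0 : LinearMap.adjoint B x = 0 := by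
        have := sq_nonneg ‖A x‖
        have := sq_nonneg ‖LinearMap.adjoint B x‖
        have hn : ‖LinearMap.adjoint B x‖ ^ 2 = 0 := by linarith
        simpa using sq_eq_zero_iff.mp hn
      intro u hu
      rcases Submodule.mem_sup.mp hu with ⟨y, ⟨z, rfl⟩, w, ⟨v, rfl⟩, rfl⟩
      rw [inner_add_left, e2, LinearMap.adjoint_inner_left, hB0, hA0,
        inner_zero_right, inner_zero_right, add_zero]
    · intro hx
      have hA0 : A x = 0 := by
        rw [← inner_self_eq_zero (𝕜 := ℂ), ← LinearMap.adjoint_inner_left]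
        exact hx _ (Submodule.mem_sup_right ⟨A x, rfl⟩)
      have hB0 : LinearMap.adjoint B x = 0 := by
        rw [← inner_self_eq_zero (𝕜 := ℂ)]
        have e2 : inner (𝕜 := ℂ) (B (LinearMap.adjoint B x)) x
            = inner ℂ (LinearMap.adjoint B x) (LinearMap.adjoint B x) := by
          conv_lhs => rw [← LinearMap.adjoint_adjoint (A := B)]
          rw [LinearMap.adjoint_inner_left]
          simp [LinearMap.adjoint_adjoint]
        rw [← e2]
        exact hx _ (Submodule.mem_sup_left ⟨LinearMap.adjoint B x, rfl⟩)
      show Δ x = 0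
      rw [hΔ]
      simp [hA0, hB0]
  have hinf : LinearMap.range B ⊓ LinearMap.range (LinearMap.adjoint A) = ⊥ := by
    rw [Submodule.eq_bot_iff]
    rintro x ⟨⟨z, rfl⟩, ⟨y, hy⟩⟩
    rw [← inner_self_eq_zero (𝕜 := ℂ)]
    nth_rewrite 2 [← hy]
    rw [LinearMap.adjoint_inner_right, hABapply, inner_zero_left]
  refine ⟨?_, finrank_range_adjoint A, ?_⟩
  · rw [hker, sup_assoc, sup_comm]
    exact Submodule.sup_orthogonal_of_hasOrthogonalProjection
  · have h1 := Submodule.finrank_add_finrank_orthogonal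
      (LinearMap.range B ⊔ LinearMap.range (LinearMap.adjoint A))
    have h2 := Submodule.finrank_sup_add_finrank_inf_eq
      (LinearMap.range B) (LinearMap.range (LinearMap.adjoint A))
    rw [hinf, finrank_bot] at h2
    rw [hker, finrank_range_adjoint A]
    omega
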